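/- For the m×n king graph, the domination polynomial evaluated at -1 equals (-1)^{⌈m/2⌉·⌈n/2⌉}. Equivalently, the number of even-size dominating sets and odd-size dominating sets differ by exactly 1. -/

import Mathlib

/-- The `m × n` king graph: vertices are squares of an `m × n` board
(vertex `p` represents board square `(p.1.val + 1, p.2.val + 1)`), with
`p` adjacent to `q` iff `p ≠ q` and `max |x−x'| |y−y'| = 1`. -/
def kingGraph (m n : ℕ) : SimpleGraph (Fin m × Fin n) where
  Adj p q := p ≠ q ∧
    max ((p.1.val : ℤ) - q.1.val).natAbs ((p.2.val : ℤ) - q.2.val).natAbs = 1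
  symm := by
    constructor
    intro p q ⟨h1, h2⟩
    refine ⟨h1.symm, ?_⟩
    rw [show ((q.1.val : ℤ) - p.1.val) = -((p.1.val : ℤ) - q.1.val) by ring,
      show ((q.2.val : ℤ) - p.2.val) = -((p.2.val : ℤ) - q.2.val) by ring,
      Int.natAbs_neg, Int.natAbs_neg]
    exact h2
  loopless := by constructor; intro p ⟨h1, _⟩; exact h1 rfl

instance (m n : ℕ) : DecidableRel (kingGraph m n).Adj :=
  fun p q => decidable_of_iff (p ≠ q ∧
    max ((p.1.val : ℤ) - q.1.val).natAbs ((p.2.val : ℤ) - q.2.val).natAbs = 1) Iff.rfl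

/-- `S` is a dominating set: every vertex is in `S` or adjacent to a member of `S`. -/
def IsDomSet {V : Type*} (G : SimpleGraph V) (S : Finset V) : Prop :=
  ∀ v, v ∈ S ∨ ∃ u ∈ S, G.Adj u v

instance {V : Type*} [Fintype V] [DecidableEq V] (G : SimpleGraph V)
    [DecidableRel G.Adj] : DecidablePred (IsDomSet G) :=
  fun _ => inferInstanceAs (Decidable (∀ _, _ ∨ _))

namespace KingProof

open Finset

/-! ### Generic toggle involution machinery -/

variable {α : Type*} [DecidableEq α]

/-- Toggle membership of `p` in `S`. -/
def tog (p : α) (S : Finset α) : Finset α :=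
  if p ∈ S then S.erase p else insert p S

lemma tog_tog (p : α) (S : Finset α) : tog p (tog p S) = S := by
  unfold tog
  by_cases h : p ∈ S
  · simp [h, Finset.insert_erase]
  · simp [h, Finset.erase_insert]

lemma tog_sign (p : α) (S : Finset α) :
    ((-1 : ℤ)) ^ (tog p S).card = -((-1 : ℤ) ^ S.card) := by
  unfold tog
  by_cases h : p ∈ S
  · rw [if_pos h, show S.card = (S.erase p).card + 1 from (Finset.card_erase_add_one h).symm,
      pow_succ]
    ring
  · rw [if_neg h, Finset.card_insert_of_notMem h, pow_succ]
    ring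

lemma tog_ne (p : α) (S : Finset α) : tog p S ≠ S := by
  unfold tog
  split_ifs with h
  · intro hEq
    exact Finset.notMem_erase p S (hEq.symm ▸ h)
  · intro hEq
    exact h (hEq ▸ Finset.mem_insert_self p S)

/-- The pivot step: restricting the signed sum to sets whose toggle leaves `P`. -/
lemma pivot_sum [Fintype α] (P : Finset α → Prop) [DecidablePred P] (p : α) :
    ∑ S ∈ Finset.univ.filter P, (-1 : ℤ) ^ S.card
      = ∑ S ∈ Finset.univ.filter (fun S => P S ∧ ¬ P (tog p S)), (-1 : ℤ) ^ S.card := by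
  classical
  rw [← Finset.sum_filter_add_sum_filter_not (Finset.univ.filter P)
    (fun S => P (tog p S)) (fun S => (-1 : ℤ) ^ S.card)]
  have h0 : ∑ S ∈ (Finset.univ.filter P).filter (fun S => P (tog p S)),
      (-1 : ℤ) ^ S.card = 0 := by
    refine Finset.sum_involution (fun S _ => tog p S) ?_ ?_ ?_ ?_
    · intro S _
      rw [tog_sign]; ring
    · intro S _ _
      exact tog_ne p S
    · intro S hS
      simp only [Finset.mem_filter, Finset.mem_univ, true_and] at hS ⊢
      exact ⟨hS.2, by rw [tog_tog]; exact hS.1⟩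
    · intro S _
      exact tog_tog p S
  rw [h0, zero_add, Finset.filter_filter]

/-! ### King graph helpers -/

lemma adj_iff {m n : ℕ} (u v : Fin m × Fin n) :
    (kingGraph m n).Adj u v ↔
      (¬(u.1.val = v.1.val ∧ u.2.val = v.2.val) ∧
        u.1.val ≤ v.1.val + 1 ∧ v.1.val ≤ u.1.val + 1 ∧
        u.2.val ≤ v.2.val + 1 ∧ v.2.val ≤ u.2.val + 1) := by
  have h : (kingGraph m n).Adj u v ↔ (u ≠ v ∧
      max ((u.1.val : ℤ) - v.1.val).natAbs ((u.2.val : ℤ) - v.2.val).natAbs = 1) := Iff.rfl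
  rw [h]
  simp only [Ne, Prod.ext_iff, Fin.ext_iff]
  omega

lemma dom_mono {V : Type*} {G : SimpleGraph V} {S T : Finset V} (h : S ⊆ T)
    (hS : IsDomSet G S) : IsDomSet G T := by
  intro v
  rcases hS v with hv | ⟨u, hu, ha⟩
  · exact Or.inl (h hv)
  · exact Or.inr ⟨u, h hu, ha⟩

/-! ### The interpolating predicates -/

/-- After `t` pivot steps along the bottom row (columns `n-1, n-3, …`). -/
def A (m n t : ℕ) (S : Finset (Fin m × Fin n)) : Prop :=
  IsDomSet (kingGraph m n) S ∧
    ∀ v : Fin m × Fin n, m ≤ v.1.val + 2 → n ≤ v.2.val + 2 * t →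
      (v ∈ S ↔ (v.1.val + 1 = m ∧ n + 1 ≤ v.2.val + 2 * t ∧ v.2.val % 2 = (n + 1) % 2))

instance (m n t : ℕ) : DecidablePred (A m n t) := fun S => by
  unfold A; infer_instance

lemma A_zero {m n : ℕ} (S : Finset (Fin m × Fin n)) :
    A m n 0 S ↔ IsDomSet (kingGraph m n) S := by
  unfold A
  constructor
  · exact And.left
  · intro h
    refine ⟨h, fun v h1 h2 => ?_⟩
    have := v.2.isLt
    omega

/-! ### The key step lemma -/

lemma step (m n t : ℕ) (p : Fin m × Fin n)
    (hp1 : p.1.val + 1 = m) (hp2 : p.2.val + 2 * t + 1 = n)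
    (S : Finset (Fin m × Fin n)) :
    A m n (t + 1) S ↔ (A m n t S ∧ ¬ A m n t (tog p S)) := by
  constructor
  · rintro ⟨hdom, hcons⟩
    have hpS : p ∈ S := by
      rw [hcons p (by omega) (by omega)]
      exact ⟨hp1, by omega, by omega⟩
    have hAt : A m n t S := by
      refine ⟨hdom, fun v h1 h2 => ?_⟩
      rw [hcons v h1 (by omega)]
      constructor
      · rintro ⟨a, b, c⟩; exact ⟨a, by omega, c⟩
      · rintro ⟨a, b, c⟩; exact ⟨a, by omega, c⟩
    refine ⟨hAt, ?_⟩
    rintro ⟨hdom', -⟩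
    rw [tog, if_pos hpS] at hdom'
    rcases hdom' p with hmem | ⟨u, humem, hadj⟩
    · exact absurd (Finset.mem_erase.mp hmem).1 (by simp)
    · obtain ⟨hune, huS⟩ := Finset.mem_erase.mp humem
      rw [adj_iff] at hadj
      have h3 := (hcons u (by omega) (by omega)).mp huS
      have hne' : ¬(u.1.val = p.1.val ∧ u.2.val = p.2.val) := by
        intro hc
        exact hune (Prod.ext (Fin.ext hc.1) (Fin.ext hc.2))
      omega
  · rintro ⟨⟨hdom, hcons⟩, hnot⟩
    have hpS : p ∈ S := by
      by_contra hp
      apply hnot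
      rw [tog, if_neg hp]
      refine ⟨dom_mono (Finset.subset_insert p S) hdom, fun v h1 h2 => ?_⟩
      rw [Finset.mem_insert, hcons v h1 h2]
      constructor
      · rintro (rfl | h)
        · exact absurd h2 (by omega)
        · exact h
      · exact Or.inr
    rw [tog, if_pos hpS] at hnot
    have hnd : ¬ IsDomSet (kingGraph m n) (S.erase p) := by
      intro hd
      apply hnot
      refine ⟨hd, fun v h1 h2 => ?_⟩
      rw [Finset.mem_erase, hcons v h1 h2]
      constructor
      · exact And.right
      · intro hX
        refine ⟨?_, hX⟩
        rintro rfl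
        omega
    unfold IsDomSet at hnd
    push_neg at hnd
    obtain ⟨w, hw1, hw2⟩ := hnd
    have hwS : w ∈ S → w = p := by
      intro h
      by_contra hne
      exact hw1 (Finset.mem_erase.mpr ⟨hne, h⟩)
    have hwnadj : ∀ u, u ∈ S → u ≠ p → ¬ (kingGraph m n).Adj u w :=
      fun u hu hne => hw2 u (Finset.mem_erase.mpr ⟨hne, hu⟩)
    have hpw : w = p ∨ (kingGraph m n).Adj p w := by
      rcases hdom w with h | ⟨u, hu, ha⟩
      · exact Or.inl (hwS h)
      · by_cases hup : u = p
        · exact Or.inr (hup ▸ ha)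
        · exact absurd ha (hwnadj u hu hup)
    have hwco : m ≤ w.1.val + 2 ∧ p.2.val ≤ w.2.val + 1 ∧ w.2.val ≤ p.2.val + 1 := by
      rcases hpw with rfl | ha
      · omega
      · rw [adj_iff] at ha
        omega
    have hwn := w.2.isLt
    have hwc2 : w.2.val ≤ p.2.val := by
      by_contra hgt
      push_neg at hgt
      have ht1 : 1 ≤ t := by omega
      have hq2 : p.2.val + 2 < n := by omega
      have hq1 : m - 1 < m := by omega
      set q : Fin m × Fin n := (⟨m - 1, hq1⟩, ⟨p.2.val + 2, hq2⟩) with hqdef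
      have hqa : q.1.val = m - 1 := rfl
      have hqb : q.2.val = p.2.val + 2 := rfl
      have hqS : q ∈ S := by
        rw [hcons q (by omega) (by omega)]
        exact ⟨by omega, by omega, by omega⟩
      have hqp : q ≠ p := by
        intro h
        have : q.2.val = p.2.val := by rw [h]
        omega
      apply hwnadj q hqS hqp
      rw [adj_iff]
      refine ⟨?_, by omega, by omega, by omega, by omega⟩
      omega
    have htarget : ∀ u : Fin m × Fin n, m ≤ u.1.val + 2 → u.2.val ≤ p.2.val →
        p.2.val ≤ u.2.val + 1 → u ≠ p → u ∉ S := by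
      intro u h1 h2 h3 hne huS
      by_cases huw : u = w
      · exact hne (huw ▸ hwS (huw ▸ huS))
      · apply hwnadj u huS hne
        rw [adj_iff]
        have hval : ¬(u.1.val = w.1.val ∧ u.2.val = w.2.val) := by
          intro hc
          exact huw (Prod.ext (Fin.ext hc.1) (Fin.ext hc.2))
        have := u.1.isLt
        have := w.1.isLt
        refine ⟨hval, by omega, by omega, by omega, by omega⟩
    refine ⟨hdom, fun v h1 h2 => ?_⟩
    by_cases hsc : n ≤ v.2.val + 2 * t
    · rw [hcons v h1 hsc]
      constructor
      · rintro ⟨a, b, c⟩; exact ⟨a, by omega, c⟩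
      · rintro ⟨a, b, c⟩; exact ⟨a, by omega, c⟩
    · by_cases hvp : v = p
      · subst hvp
        simp only [hpS, true_iff]
        exact ⟨hp1, by omega, by omega⟩
      · constructor
        · intro hvS
          exact absurd hvS (htarget v h1 (by omega) (by omega) hvp)
        · rintro ⟨a, b, c⟩
          exact absurd (Prod.ext (Fin.ext (by omega)) (Fin.ext (by omega : v.2.val = p.2.val))) hvp

/-! ### Chain of pivot steps -/

lemma chain (m n : ℕ) (hm : 1 ≤ m) :
    ∀ t, t ≤ (n + 1) / 2 →
      ∑ S ∈ Finset.univ.filter (A m n 0), (-1 : ℤ) ^ S.card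
        = ∑ S ∈ Finset.univ.filter (A m n t), (-1 : ℤ) ^ S.card := by
  intro t
  induction t with
  | zero => intro _; rfl
  | succ t ih =>
    intro ht
    have h2t : 2 * t < n := by omega
    rw [ih (by omega)]
    have hq1 : m - 1 < m := by omega
    have hq2 : n - 1 - 2 * t < n := by omega
    set p : Fin m × Fin n := (⟨m - 1, hq1⟩, ⟨n - 1 - 2 * t, hq2⟩) with hpdef
    have hp1 : p.1.val + 1 = m := by
      have : p.1.val = m - 1 := rfl
      omega
    have hp2 : p.2.val + 2 * t + 1 = n := by
      have : p.2.val = n - 1 - 2 * t := rfl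
      omega
    rw [pivot_sum (A m n t) p]
    congr 1
    apply Finset.filter_congr
    intro S _
    exact (step m n t p hp1 hp2 S).symm

/-! ### The final bijection with the board with two fewer rows -/

def emb (m n : ℕ) : Fin (m - 2) × Fin n → Fin m × Fin n :=
  fun w => (Fin.castLE (Nat.sub_le m 2) w.1, w.2)

lemma emb_fst {m n : ℕ} (w : Fin (m - 2) × Fin n) : ((emb m n) w).1.val = w.1.val := rfl

lemma emb_snd {m n : ℕ} (w : Fin (m - 2) × Fin n) : ((emb m n) w).2.val = w.2.val := rfl

lemma emb_inj {m n : ℕ} : Function.Injective (emb m n) := by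
  intro a b h
  have h1 : a.1.val = b.1.val := congrArg (fun x => x.1.val) h
  have h2 : a.2.val = b.2.val := congrArg (fun x => x.2.val) h
  exact Prod.ext (Fin.ext h1) (Fin.ext h2)

lemma adj_emb {m n : ℕ} (a b : Fin (m - 2) × Fin n) :
    (kingGraph m n).Adj (emb m n a) (emb m n b) ↔ (kingGraph (m - 2) n).Adj a b := by
  rw [adj_iff, adj_iff]
  constructor <;> exact fun h => h

def Rset (m n : ℕ) : Finset (Fin m × Fin n) :=
  Finset.univ.filter (fun v => v.1.val + 1 = m ∧ v.2.val % 2 = (n + 1) % 2)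

def up (m n : ℕ) (T : Finset (Fin (m - 2) × Fin n)) : Finset (Fin m × Fin n) :=
  T.image (emb m n) ∪ Rset m n

def down (m n : ℕ) (S : Finset (Fin m × Fin n)) : Finset (Fin (m - 2) × Fin n) :=
  Finset.univ.filter (fun w => emb m n w ∈ S)

lemma mem_up {m n : ℕ} {T : Finset (Fin (m - 2) × Fin n)} {v : Fin m × Fin n} :
    v ∈ up m n T ↔ ((∃ w ∈ T, emb m n w = v) ∨
      (v.1.val + 1 = m ∧ v.2.val % 2 = (n + 1) % 2)) := by
  unfold up Rset
  simp [Finset.mem_union, Finset.mem_image, Finset.mem_filter]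

lemma mem_down {m n : ℕ} {S : Finset (Fin m × Fin n)} {w : Fin (m - 2) × Fin n} :
    w ∈ down m n S ↔ emb m n w ∈ S := by
  unfold down
  simp [Finset.mem_filter]

lemma up_dom {m n : ℕ} (hm : 1 ≤ m) {T : Finset (Fin (m - 2) × Fin n)}
    (hT : IsDomSet (kingGraph (m - 2) n) T) : IsDomSet (kingGraph m n) (up m n T) := by
  intro v
  by_cases h1 : m ≤ v.1.val + 2
  · have hv2 := v.2.isLt
    have hv1 := v.1.isLt
    obtain ⟨j, hjn, hjp, hj1, hj2⟩ :
        ∃ j, j < n ∧ j % 2 = (n + 1) % 2 ∧ j ≤ v.2.val + 1 ∧ v.2.val ≤ j + 1 := by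
      refine ⟨if v.2.val % 2 = (n + 1) % 2 then v.2.val else v.2.val + 1, ?_⟩
      split_ifs with h <;> omega
    have hm1 : m - 1 < m := by omega
    set r : Fin m × Fin n := (⟨m - 1, hm1⟩, ⟨j, hjn⟩) with hrdef
    have hr1 : r.1.val = m - 1 := rfl
    have hr2 : r.2.val = j := rfl
    have hrR : r ∈ up m n T := mem_up.mpr (Or.inr ⟨by omega, by omega⟩)
    by_cases hrv : r = v
    · exact Or.inl (hrv ▸ hrR)
    · refine Or.inr ⟨r, hrR, ?_⟩
      rw [adj_iff]
      have hval : ¬(r.1.val = v.1.val ∧ r.2.val = v.2.val) := by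
        intro hc
        exact hrv (Prod.ext (Fin.ext hc.1) (Fin.ext hc.2))
      refine ⟨hval, by omega, by omega, by omega, by omega⟩
  · have h1' : v.1.val < m - 2 := by omega
    have hw : emb m n (⟨v.1.val, h1'⟩, v.2) = v := Prod.ext (Fin.ext rfl) rfl
    rcases hT ((⟨v.1.val, h1'⟩, v.2)) with hmem | ⟨u, hu, hadj⟩
    · exact Or.inl (mem_up.mpr (Or.inl ⟨_, hmem, hw⟩))
    · refine Or.inr ⟨emb m n u, mem_up.mpr (Or.inl ⟨u, hu, rfl⟩), ?_⟩
      rw [← hw]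
      exact (adj_emb u _).mpr hadj

lemma up_final {m n : ℕ} (hm : 1 ≤ m) {T : Finset (Fin (m - 2) × Fin n)}
    (v : Fin m × Fin n) (h1 : m ≤ v.1.val + 2) :
    v ∈ up m n T ↔ (v.1.val + 1 = m ∧ v.2.val % 2 = (n + 1) % 2) := by
  rw [mem_up]
  constructor
  · rintro (⟨w, hw, rfl⟩ | h)
    · have := w.1.isLt
      have := emb_fst (m := m) (n := n) w
      omega
    · exact h
  · exact Or.inr

lemma down_dom {m n : ℕ} (hm : 1 ≤ m) {S : Finset (Fin m × Fin n)}
    (hd : IsDomSet (kingGraph m n) S)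
    (hc : ∀ v : Fin m × Fin n, m ≤ v.1.val + 2 →
      (v ∈ S ↔ (v.1.val + 1 = m ∧ v.2.val % 2 = (n + 1) % 2))) :
    IsDomSet (kingGraph (m - 2) n) (down m n S) := by
  intro w
  have hwlt := w.1.isLt
  rcases hd (emb m n w) with hmem | ⟨u, hu, hadj⟩
  · exact Or.inl (mem_down.mpr hmem)
  · rw [adj_iff] at hadj
    have hembw := emb_fst (m := m) (n := n) w
    by_cases hu1 : m ≤ u.1.val + 2
    · exfalso
      have := ((hc u hu1).mp hu).1
      omega
    · have hu1' : u.1.val < m - 2 := by omega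
      have hemb : emb m n (⟨u.1.val, hu1'⟩, u.2) = u := Prod.ext (Fin.ext rfl) rfl
      refine Or.inr ⟨(⟨u.1.val, hu1'⟩, u.2), mem_down.mpr (by rw [hemb]; exact hu), ?_⟩
      apply (adj_emb _ _).mp
      rw [hemb]
      rw [adj_iff]
      exact hadj

lemma up_down {m n : ℕ} (hm : 1 ≤ m) {S : Finset (Fin m × Fin n)}
    (hc : ∀ v : Fin m × Fin n, m ≤ v.1.val + 2 →
      (v ∈ S ↔ (v.1.val + 1 = m ∧ v.2.val % 2 = (n + 1) % 2))) :
    up m n (down m n S) = S := by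
  ext v
  rw [mem_up]
  by_cases h1 : m ≤ v.1.val + 2
  · constructor
    · rintro (⟨w, hw, rfl⟩ | h)
      · have := w.1.isLt
        have := emb_fst (m := m) (n := n) w
        exfalso
        omega
      · exact (hc v h1).mpr h
    · intro h
      right
      exact (hc v h1).mp h
  · constructor
    · rintro (⟨w, hw, rfl⟩ | h)
      · exact mem_down.mp hw
      · exfalso
        omega
    · intro hvS
      left
      have h1' : v.1.val < m - 2 := by omega
      have hemb : emb m n (⟨v.1.val, h1'⟩, v.2) = v := Prod.ext (Fin.ext rfl) rfl
      exact ⟨(⟨v.1.val, h1'⟩, v.2), mem_down.mpr (by rw [hemb]; exact hvS), hemb⟩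

lemma down_up {m n : ℕ} {T : Finset (Fin (m - 2) × Fin n)} :
    down m n (up m n T) = T := by
  ext w
  rw [mem_down, mem_up]
  constructor
  · rintro (⟨w', hw', heq⟩ | ⟨h1, h2⟩)
    · rwa [← emb_inj heq]
    · have := w.1.isLt
      have := emb_fst (m := m) (n := n) w
      omega
  · intro h
    exact Or.inl ⟨w, h, rfl⟩

lemma count_parity (r : ℕ) (hr : r ≤ 1) :
    ∀ n : ℕ, ((Finset.range n).filter (fun j => j % 2 = r)).card = (n + 1 - r) / 2 := by
  intro n
  induction n with
  | zero => simp; omega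
  | succ n ih =>
    rw [Finset.range_add_one, Finset.filter_insert]
    split_ifs with h
    · rw [Finset.card_insert_of_notMem (by simp), ih]
      omega
    · rw [ih]
      omega

lemma card_Rset {m n : ℕ} (hm : 1 ≤ m) : (Rset m n).card = (n + 1) / 2 := by
  have hcard : (Rset m n).card
      = ((Finset.range n).filter (fun j => j % 2 = (n + 1) % 2)).card := by
    apply Finset.card_bij (fun v _ => v.2.val)
    · intro v hv
      rw [Rset, Finset.mem_filter] at hv
      simp only [Finset.mem_filter, Finset.mem_range]
      exact ⟨v.2.isLt, hv.2.2⟩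
    · intro a ha b hb hab
      rw [Rset, Finset.mem_filter] at ha hb
      exact Prod.ext (Fin.ext (by omega)) (Fin.ext hab)
    · intro b hb
      simp only [Finset.mem_filter, Finset.mem_range] at hb
      have hm1 : m - 1 < m := by omega
      refine ⟨(⟨m - 1, hm1⟩, ⟨b, hb.1⟩), ?_, rfl⟩
      rw [Rset, Finset.mem_filter]
      have hfst : ((⟨m - 1, hm1⟩, ⟨b, hb.1⟩) : Fin m × Fin n).1.val = m - 1 := rfl
      exact ⟨Finset.mem_univ _, by omega, hb.2⟩
  rw [hcard, count_parity ((n + 1) % 2) (by omega) n]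
  omega

lemma card_up {m n : ℕ} (hm : 1 ≤ m) (T : Finset (Fin (m - 2) × Fin n)) :
    (up m n T).card = T.card + (n + 1) / 2 := by
  unfold up
  rw [Finset.card_union_of_disjoint, Finset.card_image_of_injective _ emb_inj,
    card_Rset hm]
  rw [Finset.disjoint_left]
  intro a himg hR
  obtain ⟨w, _, rfl⟩ := Finset.mem_image.mp himg
  rw [Rset, Finset.mem_filter] at hR
  have := w.1.isLt
  have := emb_fst (m := m) (n := n) w
  omega

lemma A_final_iff {m n : ℕ} (S : Finset (Fin m × Fin n)) :
    A m n ((n + 1) / 2) S ↔ (IsDomSet (kingGraph m n) S ∧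
      ∀ v : Fin m × Fin n, m ≤ v.1.val + 2 →
        (v ∈ S ↔ (v.1.val + 1 = m ∧ v.2.val % 2 = (n + 1) % 2))) := by
  unfold A
  constructor
  · rintro ⟨hd, hcons⟩
    refine ⟨hd, fun v h1 => ?_⟩
    have hv := v.2.isLt
    rw [hcons v h1 (by omega)]
    constructor
    · rintro ⟨a, b, c⟩; exact ⟨a, c⟩
    · rintro ⟨a, c⟩; exact ⟨a, by omega, c⟩
  · rintro ⟨hd, hcons⟩
    refine ⟨hd, fun v h1 h2 => ?_⟩
    have hv := v.2.isLt
    rw [hcons v h1]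
    constructor
    · rintro ⟨a, c⟩; exact ⟨a, by omega, c⟩
    · rintro ⟨a, b, c⟩; exact ⟨a, c⟩

lemma final_sum (m n : ℕ) (hm : 1 ≤ m) :
    ∑ S ∈ Finset.univ.filter (A m n ((n + 1) / 2)), (-1 : ℤ) ^ S.card
      = (-1 : ℤ) ^ ((n + 1) / 2) *
        ∑ T ∈ Finset.univ.filter (IsDomSet (kingGraph (m - 2) n)), (-1 : ℤ) ^ T.card := by
  rw [Finset.mul_sum]
  refine Finset.sum_bij' (fun S _ => down m n S) (fun T _ => up m n T) ?_ ?_ ?_ ?_ ?_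
  · intro S hS
    rw [Finset.mem_filter] at hS
    obtain ⟨hd, hc⟩ := (A_final_iff S).mp hS.2
    exact Finset.mem_filter.mpr ⟨Finset.mem_univ _, down_dom hm hd hc⟩
  · intro T hT
    rw [Finset.mem_filter] at hT
    refine Finset.mem_filter.mpr ⟨Finset.mem_univ _, (A_final_iff _).mpr
      ⟨up_dom hm hT.2, fun v h1 => up_final hm v h1⟩⟩
  · intro S hS
    rw [Finset.mem_filter] at hS
    obtain ⟨hd, hc⟩ := (A_final_iff S).mp hS.2
    exact up_down hm hc
  · intro T _
    exact down_up
  · intro S hS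
    rw [Finset.mem_filter] at hS
    obtain ⟨hd, hc⟩ := (A_final_iff S).mp hS.2
    have hcard : S.card = (down m n S).card + (n + 1) / 2 := by
      conv_lhs => rw [← up_down hm hc]
      exact card_up hm (down m n S)
    rw [hcard, pow_add]
    ring

/-! ### Base case -/

lemma base (n : ℕ) :
    ∑ S ∈ Finset.univ.filter (IsDomSet (kingGraph 0 n)), (-1 : ℤ) ^ S.card = 1 := by
  have hempty : ∀ S : Finset (Fin 0 × Fin n), S = ∅ := fun S =>
    Finset.eq_empty_of_forall_notMem (fun x _ => x.1.elim0)
  have huniv : (Finset.univ : Finset (Finset (Fin 0 × Fin n))) = {∅} := by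
    ext S
    simp only [Finset.mem_univ, Finset.mem_singleton, true_iff]
    exact hempty S
  have hdom : IsDomSet (kingGraph 0 n) ∅ := fun v => v.1.elim0
  rw [huniv, Finset.filter_singleton, if_pos hdom]
  simp

end KingProof

/-- The domination polynomial of the `m × n` king graph evaluated at `-1`
equals `(-1)^(⌈m/2⌉⌈n/2⌉)`. -/
theorem king_domination_poly_at_neg_one (m n : ℕ) :
    ∑ S ∈ Finset.univ.filter (IsDomSet (kingGraph m n)), (-1 : ℤ) ^ S.card =
      (-1 : ℤ) ^ ((m + 1) / 2 * ((n + 1) / 2)) := by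
  induction m using Nat.strong_induction_on with
  | _ m ih =>
    rcases Nat.eq_zero_or_pos m with rfl | hm
    · rw [KingProof.base n]
      norm_num
    · have h1 : Finset.univ.filter (IsDomSet (kingGraph m n))
          = Finset.univ.filter (KingProof.A m n 0) := by
        apply Finset.filter_congr
        intro S _
        exact (KingProof.A_zero S).symm
      rw [h1, KingProof.chain m n hm ((n + 1) / 2) le_rfl, KingProof.final_sum m n hm,
        ih (m - 2) (by omega)]
      rw [← pow_add]
      congr 1
      have hh : (m + 1) / 2 = (m - 2 + 1) / 2 + 1 := by omega
      rw [hh, add_mul, one_mul, add_comm]
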